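/- Let L be a regular language over a finite alphabet Σ with quotient complexity κ(L) = n. If L is uniquely reachable, i.e., L_w = L implies w = ε, then σ(L) ≤ (n-1)^n. -/

import Mathlib

/-- The left quotient of a language `L` by a word `w`: `{x | w ++ x ∈ L}`. -/
def leftQ {α : Type*} (L : Set (List α)) (w : List α) : Set (List α) :=
  {x | w ++ x ∈ L}

/-- Quotient (state) complexity: the number of distinct left quotients of `L`. -/
noncomputable def quotCompl {α : Type*} (L : Set (List α)) : ℕ :=
  Nat.card (Set.range (leftQ L))

/-- The syntactic (Myhill) congruence of `L`. -/
def synRel {α : Type*} (L : Set (List α)) (x y : List α) : Prop :=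
  ∀ u v : List α, u ++ x ++ v ∈ L ↔ u ++ y ++ v ∈ L

/-- The syntactic setoid on the free semigroup of non-empty words. -/
def synSetoid {α : Type*} (L : Set (List α)) : Setoid {w : List α // w ≠ []} :=
  ⟨fun x y => synRel L x.1 y.1,
   ⟨fun _ _ _ => Iff.rfl, fun h u v => (h u v).symm,
    fun h₁ h₂ u v => (h₁ u v).trans (h₂ u v)⟩⟩

/-- Syntactic complexity: the cardinality of the syntactic semigroup of `L`. -/
noncomputable def synCompl {α : Type*} (L : Set (List α)) : ℕ :=
  Nat.card (Quotient (synSetoid L))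
lemma leftQ_append_congr {α : Type*} {L : Set (List α)} {u u' : List α}
    (h : leftQ L u = leftQ L u') (w : List α) :
    leftQ L (u ++ w) = leftQ L (u' ++ w) := by
  ext x
  have := Set.ext_iff.mp h (w ++ x)
  simpa [leftQ, List.append_assoc] using this

theorem stmt_5 {α : Type*} [Fintype α] (L : Set (List α))
    (hreg : (Set.range (leftQ L)).Finite) (n : ℕ) (hn : quotCompl L = n)
    (hur : ∀ w : List α, leftQ L w = L → w = []) :
    synCompl L ≤ (n - 1) ^ n := by
  classical
  haveI : Finite (Set.range (leftQ L)) := hreg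
  have hLmem : L ∈ Set.range (leftQ L) := ⟨[], by ext x; simp [leftQ]⟩
  set T : Set (Set (List α)) := Set.range (leftQ L) \ {L} with hT
  haveI : Finite T := (hreg.diff (t := {L})).to_subtype
  -- the map from nonempty words to transformations
  have Fmem : ∀ (w : {w : List α // w ≠ []}) (q : Set.range (leftQ L)),
      leftQ L (q.2.choose ++ w.1) ∈ T := by
    intro w q
    refine ⟨⟨_, rfl⟩, ?_⟩
    intro hmem
    have := hur _ hmem
    rcases List.append_eq_nil_iff.mp this with ⟨_, h2⟩
    exact w.2 h2
  set F : {w : List α // w ≠ []} → (Set.range (leftQ L) → T) :=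
    fun w q => ⟨leftQ L (q.2.choose ++ w.1), Fmem w q⟩ with hF
  have hresp : ∀ w w', synRel L w.1 w'.1 → F w = F w' := by
    intro w w' h
    funext q
    apply Subtype.ext
    show leftQ L (q.2.choose ++ w.1) = leftQ L (q.2.choose ++ w'.1)
    ext x
    have := h q.2.choose x
    simpa [leftQ, List.append_assoc] using this
  let Φ : Quotient (synSetoid L) → (Set.range (leftQ L) → T) :=
    Quotient.lift F hresp
  have hinj : Function.Injective Φ := by
    intro a b
    induction a using Quotient.ind with | _ w =>
    induction b using Quotient.ind with | _ w' =>
    intro h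
    apply Quotient.sound
    intro u v
    have hq : leftQ L u ∈ Set.range (leftQ L) := ⟨u, rfl⟩
    set q : Set.range (leftQ L) := ⟨leftQ L u, hq⟩ with hqdef
    have h1 : leftQ L (q.2.choose ++ w.1) = leftQ L (q.2.choose ++ w'.1) :=
      Subtype.ext_iff.mp (congrFun h q)
    have hc : leftQ L q.2.choose = leftQ L u := q.2.choose_spec
    have h2 : leftQ L (u ++ w.1) = leftQ L (u ++ w'.1) :=
      (leftQ_append_congr hc.symm w.1).trans
        (h1.trans (leftQ_append_congr hc w'.1))
    have := Set.ext_iff.mp h2 v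
    simpa [leftQ, List.append_assoc] using this
  have hle : synCompl L ≤ Nat.card (Set.range (leftQ L) → T) :=
    Nat.card_le_card_of_injective Φ hinj
  have hcardT : Nat.card T = n - 1 := by
    rw [Nat.card_coe_set_eq, hT, Set.ncard_diff_singleton_of_mem hLmem]
    rw [← hn, quotCompl, Nat.card_coe_set_eq]
  have hcardQ : Nat.card (Set.range (leftQ L)) = n := hn
  calc synCompl L ≤ Nat.card (Set.range (leftQ L) → T) := hle
    _ = (n - 1) ^ n := by rw [Nat.card_fun, hcardT, hcardQ]
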